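/- Let c ∈ [0,2), λ ∈ [0,1), and set r̂_c = tanh⁻¹( c / (1 - λ² + √((1-λ²)² + c²λ²)) ). Then for all r ≥ r̂_c one has 2(1-λ²)tanh(r)/(1 - λ²tanh²(r)) ≥ c; i.e. the mean curvature of the equidistant surface Σ(r) is at least c whenever r ≥ r̂_c. -/

import Mathlib

/-- Inverse hyperbolic tangent, defined on `(-1, 1)`. -/
noncomputable def artanh (x : ℝ) : ℝ := (1 / 2) * Real.log ((1 + x) / (1 - x))

lemma tanh_eq_exp (x : ℝ) :
    Real.tanh x = (Real.exp (2 * x) - 1) / (Real.exp (2 * x) + 1) := by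
  rw [Real.tanh_eq_sinh_div_cosh, Real.sinh_eq, Real.cosh_eq]
  have h1 : Real.exp x > 0 := Real.exp_pos x
  have h2 : Real.exp (-x) = 1 / Real.exp x := by
    rw [Real.exp_neg]; ring
  have h3 : Real.exp (2 * x) = Real.exp x * Real.exp x := by
    rw [← Real.exp_add]; ring_nf
  rw [h2, h3]
  have h4 : Real.exp x + 1 / Real.exp x > 0 := by positivity
  have h5 : Real.exp x * Real.exp x + 1 > 0 := by positivity
  field_simp

lemma tanh_mono : Monotone Real.tanh := by
  intro a b hab
  rw [tanh_eq_exp, tanh_eq_exp]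
  have ha : (0:ℝ) < Real.exp (2 * a) := Real.exp_pos _
  have hb : (0:ℝ) < Real.exp (2 * b) := Real.exp_pos _
  have h : Real.exp (2 * a) ≤ Real.exp (2 * b) := Real.exp_le_exp.2 (by linarith)
  rw [div_le_div_iff₀ (by linarith) (by linarith)]
  nlinarith

lemma tanh_lt_one (x : ℝ) : Real.tanh x < 1 := by
  rw [tanh_eq_exp]
  have h : (0:ℝ) < Real.exp (2 * x) := Real.exp_pos _
  rw [div_lt_one (by linarith)]
  linarith

lemma tanh_artanh {t : ℝ} (h0 : -1 < t) (h1 : t < 1) : Real.tanh (artanh t) = t := by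
  have hpos : (1 + t) / (1 - t) > 0 := by
    apply div_pos <;> linarith
  have hexp : Real.exp (2 * artanh t) = (1 + t) / (1 - t) := by
    rw [artanh]
    rw [show 2 * ((1:ℝ)/2 * Real.log ((1 + t) / (1 - t))) = Real.log ((1 + t) / (1 - t)) by ring]
    exact Real.exp_log hpos
  rw [tanh_eq_exp, hexp]
  have h1t : (1:ℝ) - t > 0 := by linarith
  field_simp
  ring

theorem stmt_7 (c lam : ℝ) (hc0 : 0 ≤ c) (hc2 : c < 2) (hl0 : 0 ≤ lam) (hl1 : lam < 1)
    (r : ℝ)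
    (hr : r ≥ artanh (c / (1 - lam ^ 2
      + Real.sqrt ((1 - lam ^ 2) ^ 2 + c ^ 2 * lam ^ 2)))) :
    2 * (1 - lam ^ 2) * Real.tanh r / (1 - lam ^ 2 * Real.tanh r ^ 2) ≥ c := by
  set A : ℝ := 1 - lam ^ 2 with hA
  have hApos : 0 < A := by nlinarith
  set S : ℝ := Real.sqrt (A ^ 2 + c ^ 2 * lam ^ 2) with hS
  have hS0 : 0 ≤ S := Real.sqrt_nonneg _
  have hS2 : S ^ 2 = A ^ 2 + c ^ 2 * lam ^ 2 := Real.sq_sqrt (by positivity)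
  have hSA : A ≤ S := by nlinarith
  have hASpos : 0 < A + S := by linarith
  set t0 : ℝ := c / (A + S) with ht0
  have ht00 : 0 ≤ t0 := div_nonneg hc0 (le_of_lt hASpos)
  have ht01 : t0 < 1 := by
    rw [ht0, div_lt_one hASpos]
    by_contra h
    push_neg at h
    have h1 : S ≤ c - A := by linarith
    have h2 : S * S ≤ (c - A) * (c - A) := mul_self_le_mul_self hS0 h1
    have hcpos : 0 < c := lt_of_lt_of_le hASpos h
    have hS2' : S ^ 2 = A ^ 2 + c ^ 2 * (1 - A) := by rw [hS2, hA]; ring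
    nlinarith [h2, hS2', mul_pos (mul_pos hApos hcpos) (show (0:ℝ) < 2 - c by linarith)]
  -- key root identity
  have hroot : lam ^ 2 * c * t0 ^ 2 + 2 * A * t0 - c = 0 := by
    rw [ht0]
    field_simp
    linear_combination (-c) * hS2
  set t : ℝ := Real.tanh r with ht
  have htt0 : t0 ≤ t := by
    have := tanh_mono hr
    rwa [tanh_artanh (by linarith) ht01] at this
  have ht1 : t < 1 := tanh_lt_one r
  have hD : 0 < 1 - lam ^ 2 * t ^ 2 := by nlinarith
  rw [ge_iff_le, le_div_iff₀ hD]
  have htnn : 0 ≤ t := le_trans ht00 htt0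
  have hkey : (0:ℝ) ≤ lam ^ 2 * c * (t + t0) + 2 * A := by
    have := mul_nonneg (mul_nonneg (sq_nonneg lam) hc0) (show (0:ℝ) ≤ t + t0 by linarith)
    linarith
  nlinarith [mul_nonneg (sub_nonneg.2 htt0) hkey]
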